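/- arXiv:2003.00438 — 9 statements merged into one kernel-verified Lean document; each statement's English description precedes it below -/
import Mathlib

section
/- For any two points a, b in the Euclidean plane ℝ² (with the Euclidean norm), the integral over p from -π to π of the absolute value of the inner product ⟨b - a, (cos p, sin p)⟩ equals 4 times the distance from a to b. Equivalently, the length of the segment from a to b equals (1/4) ∫_{-π}^{π} A(p) dp, where A(p) is the length of the orthogonal projection of the segment onto the line of direction p. -/
open Real RealInnerProductSpace intervalIntegral

lemma abs_cos_periodic : Function.Periodic (fun p => |Real.cos p|) (2 * Real.pi) := by
  intro x; simp [Real.cos_add_two_pi]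

lemma integral_abs_cos : (∫ p in (-Real.pi)..Real.pi, |Real.cos p|) = 4 := by
  have hle : -(Real.pi/2) ≤ Real.pi/2 := by linarith [Real.pi_pos]
  have h1 : (∫ p in (-(Real.pi/2))..(Real.pi/2), |Real.cos p|) = 2 := by
    rw [intervalIntegral.integral_congr (g := Real.cos) ?_]
    · simp [Real.sin_pi_div_two]; ring
    · intro x hx
      rw [Set.uIcc_of_le hle] at hx
      exact abs_of_nonneg (Real.cos_nonneg_of_mem_Icc ⟨hx.1, hx.2⟩)
  have h2 : (∫ p in (Real.pi/2)..Real.pi, |Real.cos p|) = 1 := by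
    rw [intervalIntegral.integral_congr (g := fun p => -Real.cos p) ?_]
    · rw [intervalIntegral.integral_neg, integral_cos]
      simp [Real.sin_pi, Real.sin_pi_div_two]
    · intro x hx
      rw [Set.uIcc_of_le (by linarith [Real.pi_pos])] at hx
      exact abs_of_nonpos (Real.cos_nonpos_of_pi_div_two_le_of_le hx.1 (by linarith [hx.2, Real.pi_pos]))
  have h3 : (∫ p in (-Real.pi)..(-(Real.pi/2)), |Real.cos p|) = 1 := by
    rw [intervalIntegral.integral_congr (g := fun p => -Real.cos p) ?_]
    · rw [intervalIntegral.integral_neg, integral_cos]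
      simp [Real.sin_pi]
    · intro x hx
      rw [Set.uIcc_of_le (by linarith [Real.pi_pos])] at hx
      show |Real.cos x| = -Real.cos x
      rw [← Real.cos_neg]
      exact abs_of_nonpos (Real.cos_nonpos_of_pi_div_two_le_of_le (by linarith [hx.2]) (by linarith [hx.1, Real.pi_pos]))
  have hi : ∀ u v : ℝ, IntervalIntegrable (fun p => |Real.cos p|) MeasureTheory.volume u v :=
    fun u v => (Real.continuous_cos.abs).intervalIntegrable u v
  rw [← intervalIntegral.integral_add_adjacent_intervals (b := -(Real.pi/2)) (hi _ _) (hi _ _),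
      ← intervalIntegral.integral_add_adjacent_intervals (a := -(Real.pi/2)) (b := Real.pi/2) (hi _ _) (hi _ _)]
  rw [h1, h2, h3]; ring

lemma key (x y : ℝ) :
    (∫ p in (-Real.pi)..Real.pi, |x * Real.cos p + y * Real.sin p|) = 4 * Real.sqrt (x^2 + y^2) := by
  rcases eq_or_ne (Real.sqrt (x^2+y^2)) 0 with h0 | h0
  · have hx : x = 0 := by nlinarith [Real.sq_sqrt (by positivity : (0:ℝ) ≤ x^2+y^2), sq_nonneg x, sq_nonneg y]
    have hy : y = 0 := by nlinarith [Real.sq_sqrt (by positivity : (0:ℝ) ≤ x^2+y^2), sq_nonneg x, sq_nonneg y]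
    simp [hx, hy, h0]
  · set z : ℂ := ⟨x, y⟩ with hz
    have hzne : z ≠ 0 := by
      intro h; apply h0
      have : x = 0 ∧ y = 0 := by constructor <;> [exact congrArg Complex.re h; exact congrArg Complex.im h]
      simp [this.1, this.2]
    set r := Real.sqrt (x^2+y^2) with hr
    have habs : ‖z‖ = r := by
      rw [Complex.norm_def, Complex.normSq_apply]; simp [hz, hr]; ring_nf
    have hx : x = r * Real.cos z.arg := by
      rw [Complex.cos_arg hzne, habs]
      show x = r * (x / r)
      field_simp
    have hy : y = r * Real.sin z.arg := by
      rw [Complex.sin_arg, habs]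
      show y = r * (y / r)
      field_simp
    set θ := z.arg
    have hcomb : ∀ p : ℝ, x * Real.cos p + y * Real.sin p = r * Real.cos (p - θ) := by
      intro p; rw [hx, hy, Real.cos_sub]; ring
    simp_rw [hcomb, abs_mul, abs_of_nonneg (show (0:ℝ) ≤ r from Real.sqrt_nonneg _)]
    rw [intervalIntegral.integral_const_mul]
    have : (∫ p in (-Real.pi)..Real.pi, |Real.cos (p - θ)|) = 4 := by
      rw [intervalIntegral.integral_comp_sub_right (fun p => |Real.cos p|) θ]
      have hper := abs_cos_periodic.intervalIntegral_add_eq (-Real.pi - θ) (-Real.pi)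
      have e1 : -Real.pi - θ + 2 * Real.pi = Real.pi - θ := by ring
      have e2 : -Real.pi + 2 * Real.pi = Real.pi := by ring
      rw [e1, e2] at hper
      rw [hper, integral_abs_cos]
    rw [this]; ring

theorem cauchy_crofton_segment (a b : EuclideanSpace ℝ (Fin 2)) :
    (∫ p in (-Real.pi)..Real.pi,
        |⟪b - a, (WithLp.toLp 2 ![Real.cos p, Real.sin p] : EuclideanSpace ℝ (Fin 2))⟫|)
      = 4 * dist a b := by
  have hinner : ∀ p : ℝ, ⟪b - a, (WithLp.toLp 2 ![Real.cos p, Real.sin p] : EuclideanSpace ℝ (Fin 2))⟫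
      = (b - a) 0 * Real.cos p + (b - a) 1 * Real.sin p := by
    intro p
    simp [PiLp.inner_apply, Fin.sum_univ_two, RCLike.inner_apply, conj_trivial]; ring
  have hdist : dist a b = Real.sqrt (((b - a) 0)^2 + ((b - a) 1)^2) := by
    rw [dist_eq_norm, ← norm_neg, neg_sub, EuclideanSpace.norm_eq]
    simp [Fin.sum_univ_two, sq_abs]
  simp_rw [hinner]
  rw [key, hdist]
end

section
/- Let γ : ℝ → ℝ² (Euclidean plane) be a continuously differentiable curve parametrized by arc length on [0, L], i.e., ‖γ'(s)‖ = 1 for all s ∈ [0, L], where L > 0. Then (1/4) ∫_{-π}^{π} ( ∫_0^L |⟨γ'(s), (cos p, sin p)⟩| ds ) dp = L. That is, the length of the curve equals one quarter of the integral over all directions p of the total absolute projection A(p) of its length elements onto the direction p. -/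
open Real MeasureTheory

lemma abs_cos_integral : ∫ x in (-π)..π, |cos x| = 4 := by
  have h1 : ∫ x in (-π)..(-(π/2)), |cos x| = 1 := by
    rw [intervalIntegral.integral_congr (g := fun x => -cos x)]
    · rw [intervalIntegral.integral_neg, integral_cos]; norm_num
    · intro x hx
      rw [Set.uIcc_of_le (by linarith [pi_pos])] at hx
      show |cos x| = -cos x
      rw [abs_of_nonpos]
      have := Real.cos_nonpos_of_pi_div_two_le_of_le (x := -x) (by linarith [hx.2]) (by linarith [hx.1, pi_pos])
      rwa [Real.cos_neg] at this
  have h2 : ∫ x in (-(π/2))..(π/2), |cos x| = 2 := by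
    rw [intervalIntegral.integral_congr (g := fun x => cos x)]
    · rw [integral_cos]; norm_num
    · intro x hx
      rw [Set.uIcc_of_le (by linarith [pi_pos])] at hx
      show |cos x| = cos x
      exact abs_of_nonneg (Real.cos_nonneg_of_mem_Icc ⟨hx.1, hx.2⟩)
  have h3 : ∫ x in (π/2)..π, |cos x| = 1 := by
    rw [intervalIntegral.integral_congr (g := fun x => -cos x)]
    · rw [intervalIntegral.integral_neg, integral_cos]; norm_num
    · intro x hx
      rw [Set.uIcc_of_le (by linarith [pi_pos])] at hx
      show |cos x| = -cos x
      exact abs_of_nonpos (Real.cos_nonpos_of_pi_div_two_le_of_le hx.1 (by linarith [hx.2, pi_pos]))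
  have i : ∀ a b : ℝ, IntervalIntegrable (fun x => |cos x|) volume a b :=
    fun a b => (Real.continuous_cos.abs).intervalIntegrable a b
  have := intervalIntegral.integral_add_adjacent_intervals (a := -π) (b := -(π/2)) (c := π/2) (i _ _) (i _ _)
  have := intervalIntegral.integral_add_adjacent_intervals (a := -π) (b := π/2) (c := π) (i _ _) (i _ _)
  linarith

lemma abs_cos_shift (θ : ℝ) : ∫ p in (-π)..π, |cos (p - θ)| = 4 := by
  rw [intervalIntegral.integral_comp_sub_right (fun x => |cos x|) θ]
  have hper : Function.Periodic (fun x => |cos x|) (2 * π) := fun x => by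
    simp [Real.cos_add_two_pi]
  have := hper.intervalIntegral_add_eq (-π - θ) (-π)
  have he : -π - θ + 2 * π = π - θ := by ring
  have he2 : -π + 2 * π = π := by ring
  rw [he, he2] at this
  rw [this, abs_cos_integral]

lemma key_s2 (a b : ℝ) (hab : a ^ 2 + b ^ 2 = 1) :
    ∫ p in (-π)..π, |a * cos p + b * sin p| = 4 := by
  have hz : (⟨a, b⟩ : ℂ) ≠ 0 := by
    intro h
    rw [Complex.ext_iff] at h
    simp at h
    rw [h.1, h.2] at hab; norm_num at hab
  have habs : ‖(⟨a, b⟩ : ℂ)‖ = 1 := by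
    rw [Complex.norm_def, Complex.normSq_mk]
    rw [show a * a + b * b = 1 by nlinarith]
    exact Real.sqrt_one
  set θ := Complex.arg ⟨a, b⟩
  have hc : cos θ = a := by rw [Complex.cos_arg hz, habs]; simp
  have hs : sin θ = b := by rw [Complex.sin_arg, habs]; simp
  have : ∀ p, a * cos p + b * sin p = cos (p - θ) := by
    intro p; rw [Real.cos_sub, hc, hs]; ring
  simp_rw [this]
  exact abs_cos_shift θ



open Real RealInnerProductSpace

theorem cauchy_crofton_curve (γ : ℝ → EuclideanSpace ℝ (Fin 2)) (L : ℝ)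
    (hL : 0 < L) (hγ : ContDiff ℝ 1 γ)
    (hunit : ∀ s ∈ Set.Icc (0 : ℝ) L, ‖deriv γ s‖ = 1) :
    (1 / 4) * (∫ p in (-Real.pi)..Real.pi,
        ∫ s in (0 : ℝ)..L,
          |⟪deriv γ s, (WithLp.toLp 2 ![Real.cos p, Real.sin p] : EuclideanSpace ℝ (Fin 2))⟫|)
      = L := by
  have hd : Continuous (deriv γ) := hγ.continuous_deriv le_rfl
  have hg0 : Continuous (fun s => deriv γ s 0) := (continuous_apply (0 : Fin 2)).comp ((PiLp.continuous_ofLp 2 _).comp hd)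
  have hg1 : Continuous (fun s => deriv γ s 1) := (continuous_apply (1 : Fin 2)).comp ((PiLp.continuous_ofLp 2 _).comp hd)
  have hinner : ∀ p s, ⟪deriv γ s, (WithLp.toLp 2 ![Real.cos p, Real.sin p] : EuclideanSpace ℝ (Fin 2))⟫
      = deriv γ s 0 * cos p + deriv γ s 1 * sin p := by
    intro p s
    simp [PiLp.inner_apply, Fin.sum_univ_two, mul_comm]
  have hsum : ∀ s ∈ Set.Icc (0:ℝ) L, deriv γ s 0 ^ 2 + deriv γ s 1 ^ 2 = 1 := by
    intro s hs
    have h := hunit s hs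
    rw [EuclideanSpace.norm_eq] at h
    have h2 := Real.sqrt_eq_one.mp h
    rw [Fin.sum_univ_two] at h2
    simpa [sq_abs] using h2
  have hpi : -π ≤ π := by linarith [pi_pos]
  simp_rw [hinner]
  rw [intervalIntegral.integral_of_le hpi]
  simp_rw [intervalIntegral.integral_of_le hL.le]
  have hInt : MeasureTheory.Integrable
      (Function.uncurry fun p s => |deriv γ s 0 * cos p + deriv γ s 1 * sin p|)
      ((volume.restrict (Set.Ioc (-π) π)).prod (volume.restrict (Set.Ioc 0 L))) := by
    rw [Measure.prod_restrict]
    have hF : Continuous (fun q : ℝ × ℝ => |deriv γ q.2 0 * cos q.1 + deriv γ q.2 1 * sin q.1|) := by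
      fun_prop
    apply ((hF.continuousOn.integrableOn_compact ((isCompact_Icc (a := -π) (b := π)).prod
      (isCompact_Icc (a := (0:ℝ)) (b := L)))).mono_set
      (Set.prod_mono Set.Ioc_subset_Icc_self Set.Ioc_subset_Icc_self))
  rw [MeasureTheory.integral_integral_swap hInt]
  rw [MeasureTheory.setIntegral_congr_fun measurableSet_Ioc
    (g := fun _ => (4:ℝ)) ?_]
  · rw [MeasureTheory.setIntegral_const]
    simp [Real.volume_Ioc, hL.le]
    linarith
  · intro s hs
    have h := key_s2 (deriv γ s 0) (deriv γ s 1) (hsum s (Set.Ioc_subset_Icc_self hs))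
    rw [intervalIntegral.integral_of_le hpi] at h
    exact h
end

section
/- For every natural number n ≥ 1 and every real θ, there exists a real δ with |δ| ≤ π/(2n) such that the sum over k from 0 to n-1 of |cos(θ + kπ/n)| equals cos(δ) / sin(π/(2n)). -/
open Real Finset

lemma tele_aux (h δ : ℝ) (m : ℕ) :
    2 * Real.sin h * ∑ k ∈ Finset.range m, Real.cos (δ + k * (2*h))
      = Real.sin (δ + (2*m - 1) * h) - Real.sin (δ - h) := by
  induction m with
  | zero => norm_num; ring_nf
  | succ m ih =>
    rw [Finset.sum_range_succ, mul_add, ih]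
    have key : Real.sin (δ + (2*((m:ℝ)+1) - 1) * h) - Real.sin (δ + (2*(m:ℝ) - 1) * h)
        = 2 * Real.sin h * Real.cos (δ + (m:ℝ) * (2*h)) := by
      rw [Real.sin_sub_sin]; ring_nf
    push_cast
    linarith [key]

lemma core_lemma (n m : ℕ) (hn : 1 ≤ n) (hm : m ≤ n) (δ : ℝ)
    (hpos : ∀ k < m, 0 ≤ Real.cos (δ + k * (2 * (Real.pi/(2*n)))))
    (hneg : ∀ k, m ≤ k → k < n → Real.cos (δ + k * (2 * (Real.pi/(2*n)))) ≤ 0) :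
    (∑ k ∈ Finset.range n, |Real.cos (δ + k * (2 * (Real.pi/(2*n))))|)
      = Real.sin (δ + (2*m - 1) * (Real.pi/(2*n))) / Real.sin (Real.pi/(2*n)) := by
  set h := Real.pi / (2*n) with hh
  have hn0 : (0:ℝ) < n := by exact_mod_cast hn
  have h1n : (1:ℝ) ≤ n := by exact_mod_cast hn
  have hpos' : 0 < h := by positivity
  have hlt : h < Real.pi := by
    rw [hh, div_lt_iff₀ (by positivity)]
    nlinarith [Real.pi_pos, h1n]
  have hsin : 0 < Real.sin h := Real.sin_pos_of_pos_of_lt_pi hpos' hlt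
  have hnh : (n:ℝ) * (2*h) = Real.pi := by
    rw [hh]; field_simp
  have hsplit : ∑ k ∈ Finset.range n, |Real.cos (δ + k*(2*h))|
      = 2 * (∑ k ∈ Finset.range m, Real.cos (δ + k*(2*h)))
        - ∑ k ∈ Finset.range n, Real.cos (δ + k*(2*h)) := by
    rw [← Finset.sum_range_add_sum_Ico (fun k => |Real.cos (δ + k*(2*h))|) hm,
        ← Finset.sum_range_add_sum_Ico (fun k => Real.cos (δ + k*(2*h))) hm]
    have h1 : ∑ k ∈ Finset.range m, |Real.cos (δ + k*(2*h))|
        = ∑ k ∈ Finset.range m, Real.cos (δ + k*(2*h)) :=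
      Finset.sum_congr rfl fun k hk => abs_of_nonneg (hpos k (Finset.mem_range.mp hk))
    have h2 : ∑ k ∈ Finset.Ico m n, |Real.cos (δ + k*(2*h))|
        = ∑ k ∈ Finset.Ico m n, -Real.cos (δ + k*(2*h)) :=
      Finset.sum_congr rfl fun k hk => by
        have := Finset.mem_Ico.mp hk
        exact abs_of_nonpos (hneg k this.1 this.2)
    rw [h1, h2, Finset.sum_neg_distrib]
    ring
  have t1 := tele_aux h δ m
  have t2 := tele_aux h δ n
  have hlast : Real.sin (δ + (2*(n:ℝ) - 1) * h) = - Real.sin (δ - h) := by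
    have : δ + (2*(n:ℝ) - 1) * h = (δ - h) + Real.pi := by
      rw [← hnh]; ring
    rw [this, Real.sin_add_pi]
  rw [eq_div_iff (ne_of_gt hsin)]
  have : Real.sin h * (2 * (∑ k ∈ Finset.range m, Real.cos (δ + k*(2*h)))
        - ∑ k ∈ Finset.range n, Real.cos (δ + k*(2*h))) = Real.sin (δ + (2*m - 1) * h) := by
    nlinarith [t1, t2, hlast]
  calc (∑ k ∈ Finset.range n, |Real.cos (δ + k*(2*h))|) * Real.sin h
      = Real.sin h * (2 * (∑ k ∈ Finset.range m, Real.cos (δ + k*(2*h)))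
        - ∑ k ∈ Finset.range n, Real.cos (δ + k*(2*h))) := by rw [hsplit]; ring
    _ = _ := this

theorem sum_abs_cos_equally_spaced (n : ℕ) (hn : 1 ≤ n) (θ : ℝ) :
    ∃ δ : ℝ, |δ| ≤ Real.pi / (2 * n) ∧
      (∑ k ∈ Finset.range n, |Real.cos (θ + k * Real.pi / n)|)
        = Real.cos δ / Real.sin (Real.pi / (2 * n)) := by
  set h := Real.pi / (2*(n:ℝ)) with hh
  have h1n : (1:ℝ) ≤ n := by exact_mod_cast hn
  have hn0 : (0:ℝ) < n := by linarith
  have hpos' : 0 < h := by positivity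
  have hnh : (n:ℝ) * h = Real.pi / 2 := by rw [hh]; field_simp
  have hterm : ∀ (x:ℝ) (k : ℕ), x + k * Real.pi / n = x + k * (2*h) := by
    intro x k; rw [hh]; field_simp
  set S : ℝ → ℝ := fun x => ∑ k ∈ Finset.range n, |Real.cos (x + k * (2*h))| with hS
  have hSper : Function.Periodic S (2*h) := by
    intro x
    simp only [hS]
    have e1 : ∀ k:ℕ, |Real.cos (x + 2*h + k*(2*h))| = |Real.cos (x + (k+1:ℕ)*(2*h))| := by
      intro k; congr 2; push_cast; ring
    calc ∑ k ∈ Finset.range n, |Real.cos (x + 2*h + k*(2*h))|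
        = ∑ k ∈ Finset.range n, |Real.cos (x + ((k+1:ℕ))*(2*h))| :=
          Finset.sum_congr rfl fun k _ => e1 k
      _ = ∑ k ∈ Finset.range (n+1), |Real.cos (x + k*(2*h))| - |Real.cos (x + (0:ℕ)*(2*h))| := by
          rw [Finset.sum_range_succ']; ring
      _ = ∑ k ∈ Finset.range n, |Real.cos (x + k*(2*h))| := by
          rw [Finset.sum_range_succ]
          have e2 : Real.cos (x + (n:ℝ)*(2*h)) = - Real.cos x := by
            have e3 : x + (n:ℝ)*(2*h) = x + Real.pi := by
              have : (n:ℝ)*(2*h) = Real.pi := by linarith [hnh]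
              rw [this]
            rw [e3, Real.cos_add_pi]
          push_cast
          rw [e2]
          simp [abs_neg]
  set t : ℤ := round (θ / (2*h)) with ht
  set δ₀ : ℝ := θ - t * (2*h) with hδ₀
  have hδ₀bound : |δ₀| ≤ h := by
    have h1 : |θ/(2*h) - t| ≤ 1/2 := by rw [ht]; exact abs_sub_round _
    have h2 : δ₀ = (θ/(2*h) - t) * (2*h) := by
      rw [hδ₀]; field_simp
    rw [h2, abs_mul, abs_of_pos (by positivity : (0:ℝ) < 2*h)]
    nlinarith [h1]
  have hred : S δ₀ = S θ := hSper.sub_int_mul_eq t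
  have habs := abs_le.mp hδ₀bound
  have hSeq : (∑ k ∈ Finset.range n, |Real.cos (θ + k * Real.pi / n)|) = S θ :=
    Finset.sum_congr rfl fun k _ => by rw [hterm]
  have hcoreS : ∀ m : ℕ, m ≤ n → (∀ k < m, 0 ≤ Real.cos (δ₀ + k*(2*h))) →
      (∀ k, m ≤ k → k < n → Real.cos (δ₀ + k*(2*h)) ≤ 0) →
      S δ₀ = Real.sin (δ₀ + (2*(m:ℝ)-1)*h)/Real.sin h := by
    intro m hmn hp hq
    simpa only [← hh] using
      core_lemma n m hn hmn δ₀ (by simpa only [← hh] using hp) (by simpa only [← hh] using hq)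
  clear hδ₀ ht hS
  clear_value δ₀ t S
  by_cases hsgn : 0 ≤ δ₀
  case pos =>
    set m := (n+1)/2 with hm
    have hmn : m ≤ n := by omega
    have hb1' : (2*(m:ℝ)) ≤ n+1 := by exact_mod_cast (by omega : 2*m ≤ n+1)
    have hb2' : (n:ℝ) ≤ 2*m := by exact_mod_cast (by omega : n ≤ 2*m)
    set c : ℝ := 2*(m:ℝ) - 1 - n with hc
    have hc1 : -1 ≤ c := by rw [hc]; linarith
    have hc2 : c ≤ 0 := by rw [hc]; linarith
    have u1 : c * h ≤ 0 := mul_nonpos_of_nonpos_of_nonneg hc2 hpos'.le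
    have u2 : -h ≤ c * h := by nlinarith [hpos'.le]
    refine ⟨δ₀ + c * h, ?_, ?_⟩
    · rw [abs_le]; constructor <;> linarith [habs.1, habs.2]
    · have hcosδ : Real.cos (δ₀ + c * h) = Real.sin (δ₀ + (2*(m:ℝ)-1)*h) := by
        have e : δ₀ + c * h = (δ₀ + (2*(m:ℝ)-1)*h) - Real.pi/2 := by
          rw [← hnh, hc]; ring
        rw [e, Real.cos_sub_pi_div_two]
      rw [hSeq, ← hred, hcosδ]
      refine hcoreS m hmn ?_ ?_
      · intro k hk
        apply Real.cos_nonneg_of_mem_Icc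
        constructor
        · have h0 : (0:ℝ) ≤ (k:ℝ)*(2*h) := by positivity
          linarith [Real.pi_pos, hsgn]
        · have hk' : (2*(k:ℝ)+1) ≤ n := by exact_mod_cast (by omega : 2*k+1 ≤ n)
          have p := mul_le_mul_of_nonneg_right hk' hpos'.le
          linarith [habs.2, hnh]
      · intro k hk1 hk2
        apply Real.cos_nonpos_of_pi_div_two_le_of_le
        · have hk' : (n:ℝ) ≤ 2*(k:ℝ) := by exact_mod_cast (by omega : n ≤ 2*k)
          have p := mul_le_mul_of_nonneg_right hk' hpos'.le
          linarith [hsgn, hnh]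
        · have hk' : (2*(k:ℝ)+1) ≤ 2*n := by exact_mod_cast (by omega : 2*k+1 ≤ 2*n)
          have p := mul_le_mul_of_nonneg_right hk' hpos'.le
          linarith [habs.2, Real.pi_pos, hnh]
  case neg =>
    push_neg at hsgn
    set m := n/2 + 1 with hm
    have hmn : m ≤ n := by omega
    have hb1' : (2*(m:ℝ)) ≤ n+2 := by exact_mod_cast (by omega : 2*m ≤ n+2)
    have hb2' : (n:ℝ)+1 ≤ 2*m := by exact_mod_cast (by omega : n+1 ≤ 2*m)
    set c : ℝ := 2*(m:ℝ) - 1 - n with hc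
    have hc1 : 0 ≤ c := by rw [hc]; linarith
    have hc2 : c ≤ 1 := by rw [hc]; linarith
    have u1 : 0 ≤ c * h := mul_nonneg hc1 hpos'.le
    have u2 : c * h ≤ h := by nlinarith [hpos'.le]
    refine ⟨δ₀ + c * h, ?_, ?_⟩
    · rw [abs_le]; constructor <;> linarith [habs.1, habs.2]
    · have hcosδ : Real.cos (δ₀ + c * h) = Real.sin (δ₀ + (2*(m:ℝ)-1)*h) := by
        have e : δ₀ + c * h = (δ₀ + (2*(m:ℝ)-1)*h) - Real.pi/2 := by
          rw [← hnh, hc]; ring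
        rw [e, Real.cos_sub_pi_div_two]
      rw [hSeq, ← hred, hcosδ]
      refine hcoreS m hmn ?_ ?_
      · intro k hk
        apply Real.cos_nonneg_of_mem_Icc
        constructor
        · have h0 : (0:ℝ) ≤ (k:ℝ)*(2*h) := by positivity
          have q := mul_le_mul_of_nonneg_right h1n hpos'.le
          linarith [habs.1, hnh]
        · have hk' : (2*(k:ℝ)) ≤ n := by exact_mod_cast (by omega : 2*k ≤ n)
          have p := mul_le_mul_of_nonneg_right hk' hpos'.le
          linarith [hsgn.le, hnh]
      · intro k hk1 hk2
        apply Real.cos_nonpos_of_pi_div_two_le_of_le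
        · have hk' : (n:ℝ)+1 ≤ 2*(k:ℝ) := by exact_mod_cast (by omega : n+1 ≤ 2*k)
          have p := mul_le_mul_of_nonneg_right hk' hpos'.le
          linarith [habs.1, hnh]
        · have hk' : (2*(k:ℝ)+1) ≤ 2*n := by exact_mod_cast (by omega : 2*k+1 ≤ 2*n)
          have p := mul_le_mul_of_nonneg_right hk' hpos'.le
          linarith [hsgn.le, Real.pi_pos, hnh, hpos'.le]
end

section
/- For every natural number n ≥ 1 and every real θ, letting M = (1/n) · Σ_{k=0}^{n-1} |cos(θ + kπ/n)| be the average over n equally spaced directions of the absolute projection of a unit segment with direction angle θ, one has |(π/2)·M − 1| ≤ π²/(8n²). -/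
open Real Finset

private lemma tele_sum (ψ x : ℝ) (K : ℕ) :
    (2 * Real.sin x) * ∑ k ∈ Finset.range K, Real.cos (ψ + 2 * k * x)
      = Real.sin (ψ + (2 * K - 1) * x) - Real.sin (ψ - x) := by
  induction K with
  | zero =>
    simp only [Finset.range_zero, Finset.sum_empty, mul_zero, Nat.cast_zero]
    ring_nf
  | succ K ih =>
    rw [Finset.sum_range_succ, mul_add, ih]
    have h : Real.sin ((ψ + 2*K*x) + x) - Real.sin ((ψ + 2*K*x) - x)
        = 2 * Real.sin x * Real.cos (ψ + 2*(K:ℝ)*x) := by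
      rw [Real.sin_add, Real.sin_sub]; ring
    push_cast
    ring_nf
    ring_nf at h
    linarith

private lemma closed_form (n m : ℕ) (hmn : m ≤ n) (x ψ : ℝ)
    (hsx : Real.sin x ≠ 0) (hπ : 2 * (n:ℝ) * x = Real.pi)
    (hpos : ∀ k ∈ Finset.range m, 0 ≤ Real.cos (ψ + 2 * k * x))
    (hneg : ∀ k ∈ Finset.Ico m n, Real.cos (ψ + 2 * k * x) ≤ 0) :
    ∑ k ∈ Finset.range n, |Real.cos (ψ + 2 * k * x)|
      = Real.sin (ψ + (2 * m - 1) * x) / Real.sin x := by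
  have h1 : ∑ k ∈ Finset.range n, |Real.cos (ψ + 2 * k * x)|
      = ∑ k ∈ Finset.range m, Real.cos (ψ + 2 * k * x)
        - (∑ k ∈ Finset.range n, Real.cos (ψ + 2 * k * x)
            - ∑ k ∈ Finset.range m, Real.cos (ψ + 2 * k * x)) := by
    rw [← Finset.sum_range_add_sum_Ico _ hmn,
        Finset.sum_congr rfl (fun k hk => abs_of_nonneg (hpos k hk)),
        Finset.sum_congr rfl (fun k hk => abs_of_nonpos (hneg k hk)),
        Finset.sum_neg_distrib, ← Finset.sum_Ico_eq_sub _ hmn]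
    ring
  have t1 := tele_sum ψ x m
  have t2 := tele_sum ψ x n
  have hn' : Real.sin (ψ + (2*(n:ℝ) - 1)*x) = - Real.sin (ψ - x) := by
    have e : ψ + (2*(n:ℝ) - 1)*x = (ψ - x) + π := by rw [← hπ]; ring
    rw [e, Real.sin_add_pi]
  rw [hn'] at t2
  rw [h1, eq_div_iff hsx]
  linear_combination t1 - t2/2

private lemma periodic_sum (n : ℕ) (hn : 1 ≤ n) :
    Function.Periodic
      (fun θ : ℝ => ∑ k ∈ Finset.range n, |Real.cos (θ + k * Real.pi / n)|)
      (Real.pi / n) := by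
  intro θ
  simp only
  have hn0 : (n:ℝ) ≠ 0 := Nat.cast_ne_zero.mpr (by omega)
  calc ∑ k ∈ Finset.range n, |Real.cos (θ + π/n + k * π / n)|
      = ∑ k ∈ Finset.range n, |Real.cos (θ + (↑(k+1)) * π / n)| := by
        refine Finset.sum_congr rfl fun k _ => ?_
        push_cast; ring_nf
    _ = ∑ k ∈ Finset.range (n+1), |Real.cos (θ + k * π / n)| - |Real.cos (θ + 0 * π / n)| := by
        rw [Finset.sum_range_succ' (fun k : ℕ => |Real.cos (θ + k * π / n)|) n]
        push_cast
        ring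
    _ = ∑ k ∈ Finset.range n, |Real.cos (θ + k * π / n)| := by
        rw [Finset.sum_range_succ]
        have e : θ + (n:ℝ) * π / n = (θ + 0 * π / n) + π := by
          field_simp
          ring
        rw [e, Real.cos_add_pi, abs_neg]
        ring

private lemma final_bound (n : ℕ) (hn : 1 ≤ n) (u : ℝ)
    (hu : |u - Real.pi/2| ≤ Real.pi/(2*n)) :
    |Real.pi/2 * ((1/(n:ℝ)) * (Real.sin u / Real.sin (Real.pi/(2*n)))) - 1|
      ≤ Real.pi^2/(8*n^2) := by
  have hn0 : (0:ℝ) < n := by exact_mod_cast hn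
  have hn1 : (1:ℝ) ≤ n := by exact_mod_cast hn
  set x : ℝ := π/(2*n) with hxdef
  have hx0 : 0 < x := by positivity
  have hxle : x ≤ π/2 := by
    rw [hxdef, div_le_div_iff₀ (by positivity) two_pos]
    nlinarith [Real.pi_pos]
  have hsx : 0 < Real.sin x := Real.sin_pos_of_pos_of_lt_pi hx0
    (lt_of_le_of_lt hxle (by linarith [Real.pi_pos]))
  have hmain : Real.pi/2 * ((1/(n:ℝ)) * (Real.sin u / Real.sin x))
      = x * Real.sin u / Real.sin x := by
    rw [hxdef]; field_simp
  have hrhs : Real.pi^2/(8*(n:ℝ)^2) = x^2/2 := by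
    rw [hxdef]; field_simp; ring
  rw [hmain, hrhs]
  have hsinu_le : Real.sin u ≤ 1 := Real.sin_le_one u
  have hsinu_ge : Real.cos x ≤ Real.sin u := by
    have h1 : Real.cos |π/2 - u| ≥ Real.cos x := by
      apply Real.cos_le_cos_of_nonneg_of_le_pi (abs_nonneg _)
        (le_trans hxle (by linarith [Real.pi_pos]))
      rwa [abs_sub_comm] at hu
    rwa [Real.cos_abs, Real.cos_pi_div_two_sub] at h1
  have hcosx : 1 - x^2/2 ≤ Real.cos x := Real.one_sub_sq_div_two_le_cos
  have hsinx_le : Real.sin x ≤ x := Real.sin_le hx0.le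
  have hcosx_nonneg : 0 ≤ Real.cos x :=
    Real.cos_nonneg_of_mem_Icc ⟨by linarith, hxle⟩
  have hkey : x ≤ Real.sin x * (1 + x^2/2) := by
    rcases eq_or_lt_of_le hn with h1 | h2
    · have hx : x = π/2 := by rw [hxdef, ← h1]; norm_num
      rw [hx, Real.sin_pi_div_two]
      nlinarith [Real.pi_gt_three]
    · have hn2 : (2:ℝ) ≤ n := by exact_mod_cast h2
      have hx1 : x ≤ 1 := by
        rw [hxdef, div_le_one (by positivity)]
        nlinarith [Real.pi_lt_d2]
      have h3 := Real.sin_gt_sub_cube hx0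
      have hx5 : x^5 ≤ x^3 := pow_le_pow_of_le_one hx0.le hx1 (by norm_num)
      nlinarith [mul_lt_mul_of_pos_right h3 (show (0:ℝ) < 1 + x^2/2 by positivity), hx5]
  rw [abs_le]
  constructor
  · have hgoal : (1 - x^2/2) * Real.sin x ≤ x * Real.sin u := by
      rcases le_or_gt (1 - x^2/2) 0 with h | h
      · have h1 : (1 - x^2/2) * Real.sin x ≤ 0 := mul_nonpos_of_nonpos_of_nonneg h hsx.le
        have h2 : 0 ≤ x * Real.sin u :=
          mul_nonneg hx0.le (hcosx_nonneg.trans hsinu_ge)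
        linarith
      · calc (1 - x^2/2) * Real.sin x ≤ (1 - x^2/2) * x :=
              mul_le_mul_of_nonneg_left hsinx_le h.le
          _ ≤ Real.cos x * x := mul_le_mul_of_nonneg_right hcosx hx0.le
          _ ≤ Real.sin u * x := mul_le_mul_of_nonneg_right hsinu_ge hx0.le
          _ = x * Real.sin u := mul_comm _ _
    have h1 : 1 - x^2/2 ≤ x * Real.sin u / Real.sin x := by
      rw [le_div_iff₀ hsx]; exact hgoal
    linarith
  · rw [sub_le_iff_le_add, div_le_iff₀ hsx]
    nlinarith [mul_le_mul_of_nonneg_left hsinu_le hx0.le]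

set_option maxHeartbeats 1600000 in
theorem cauchy_theoreme_II_error_bound (n : ℕ) (hn : 1 ≤ n) (θ : ℝ) :
    |Real.pi / 2 *
        ((1 / n) * ∑ k ∈ Finset.range n, |Real.cos (θ + k * Real.pi / n)|) - 1|
      ≤ Real.pi ^ 2 / (8 * n ^ 2) := by
  have hn0 : (0:ℝ) < n := by exact_mod_cast hn
  have hn1 : (1:ℝ) ≤ n := by exact_mod_cast hn
  have hnne : (n:ℝ) ≠ 0 := ne_of_gt hn0
  have hx0 : 0 < π/(2*(n:ℝ)) := by positivity
  set x : ℝ := π/(2*(n:ℝ)) with hxdef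
  have hπn : 2*(n:ℝ)*x = π := by rw [hxdef]; field_simp
  have hxle : x ≤ π/2 := by
    rw [hxdef, div_le_div_iff₀ (by positivity) two_pos]
    nlinarith [Real.pi_pos]
  have hsx : Real.sin x ≠ 0 :=
    ne_of_gt (Real.sin_pos_of_pos_of_lt_pi hx0 (by linarith [Real.pi_pos]))
  -- reduction of θ mod π/n
  set j : ℤ := round (θ * n / π) with hjdef
  set ψ : ℝ := θ - j * (π / n) with hψdef
  have hψx : |ψ| ≤ x := by
    have h1 : |θ*n/π - j| ≤ 1/2 := abs_sub_round _
    have h2 : ψ = (θ*n/π - j) * (π/n) := by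
      rw [hψdef]; field_simp
    rw [h2, abs_mul, abs_of_pos (show (0:ℝ) < π/n by positivity)]
    calc |θ*(n:ℝ)/π - j| * (π/n) ≤ (1/2) * (π/n) :=
          mul_le_mul_of_nonneg_right h1 (by positivity)
      _ = x := by rw [hxdef]; ring
  clear_value x j ψ
  have hsum : ∑ k ∈ Finset.range n, |Real.cos (θ + k*π/n)|
      = ∑ k ∈ Finset.range n, |Real.cos (ψ + k*π/n)| := by
    rw [hψdef]
    exact ((periodic_sum n hn).sub_int_mul_eq j).symm
  have harg : ∑ k ∈ Finset.range n, |Real.cos (ψ + k*π/n)|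
      = ∑ k ∈ Finset.range n, |Real.cos (ψ + 2*k*x)| := by
    refine Finset.sum_congr rfl fun k _ => ?_
    have : (k:ℝ)*π/n = 2*k*x := by rw [hxdef]; field_simp
    rw [this]
  rw [hsum, harg]
  -- case split on sign of ψ
  rcases le_or_gt 0 ψ with hψ0 | hψ0
  · -- ψ ∈ [0, x], m = (n+1)/2
    have hψub : ψ ≤ x := (abs_le.mp hψx).2
    set m : ℕ := (n+1)/2 with hmdef
    clear_value m
    have hm1 : 2*m ≤ n+1 := by rw [hmdef]; omega
    have hm2 : n ≤ 2*m := by omega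
    have hmn : m ≤ n := by omega
    have hm1' : 2*(m:ℝ) ≤ n+1 := by exact_mod_cast hm1
    have hm2' : (n:ℝ) ≤ 2*m := by exact_mod_cast hm2
    have hcf := closed_form n m hmn x ψ hsx hπn
      (fun k hk => by
        rw [Finset.mem_range] at hk
        have hk' : 2*(k:ℝ)+1 ≤ n := by exact_mod_cast (by omega : 2*k+1 ≤ n)
        
        have h1 : (2*(k:ℝ)+1)*x ≤ (n:ℝ)*x := mul_le_mul_of_nonneg_right (by linarith) hx0.le
        apply Real.cos_nonneg_of_mem_Icc
        constructor
        · have : 0 ≤ 2*(k:ℝ)*x := by positivity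
          nlinarith [Real.pi_pos]
        · nlinarith)
      (fun k hk => by
        rw [Finset.mem_Ico] at hk
        have hk1 : (n:ℝ) ≤ 2*k := by exact_mod_cast (by omega : n ≤ 2*k)
        have hk2 : 2*(k:ℝ) ≤ 2*(n:ℝ)-2 := by
          have : (k:ℝ)+1 ≤ n := by exact_mod_cast (by omega : k+1 ≤ n)
          linarith
        have h1 : (n:ℝ)*x ≤ 2*(k:ℝ)*x := mul_le_mul_of_nonneg_right hk1 hx0.le
        have h2 : 2*(k:ℝ)*x ≤ (2*(n:ℝ)-2)*x := mul_le_mul_of_nonneg_right hk2 hx0.le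
        apply Real.cos_nonpos_of_pi_div_two_le_of_le
        · nlinarith
        · nlinarith)
    rw [hcf, hxdef]
    apply final_bound n hn
    rw [← hxdef]
    have e1 : (2*(m:ℝ)-1)*x - (n:ℝ)*x = (2*(m:ℝ)-1-n)*x := by ring
    have e2 : ((2:ℝ)*m-1-n) * x ≤ 0 :=
      mul_nonpos_of_nonpos_of_nonneg (by linarith) hx0.le
    have e3 : -x ≤ ((2:ℝ)*m-1-n) * x := by nlinarith
    rw [abs_le]
    constructor <;> nlinarith
  · -- ψ ∈ [-x, 0), m = n/2+1
    have hψlb : -x ≤ ψ := (abs_le.mp hψx).1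
    set m : ℕ := n/2+1 with hmdef
    clear_value m
    have hm1 : n+1 ≤ 2*m := by rw [hmdef]; omega
    have hm2 : 2*m ≤ n+2 := by omega
    have hmn : m ≤ n := by omega
    have hm1' : (n:ℝ)+1 ≤ 2*m := by exact_mod_cast hm1
    have hm2' : 2*(m:ℝ) ≤ n+2 := by exact_mod_cast hm2
    have hcf := closed_form n m hmn x ψ hsx hπn
      (fun k hk => by
        rw [Finset.mem_range] at hk
        have hk' : 2*(k:ℝ) ≤ n := by exact_mod_cast (by omega : 2*k ≤ n)
        have h1 : (2*(k:ℝ))*x ≤ (n:ℝ)*x := mul_le_mul_of_nonneg_right hk' hx0.le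
        apply Real.cos_nonneg_of_mem_Icc
        constructor
        · have : 0 ≤ 2*(k:ℝ)*x := by positivity
          nlinarith
        · nlinarith)
      (fun k hk => by
        rw [Finset.mem_Ico] at hk
        have hk1 : (n:ℝ)+1 ≤ 2*k := by exact_mod_cast (by omega : n+1 ≤ 2*k)
        have hk2 : 2*(k:ℝ) ≤ 2*(n:ℝ)-2 := by
          have : (k:ℝ)+1 ≤ n := by exact_mod_cast (by omega : k+1 ≤ n)
          linarith
        have h1 : ((n:ℝ)+1)*x ≤ 2*(k:ℝ)*x := mul_le_mul_of_nonneg_right hk1 hx0.le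
        have h2 : 2*(k:ℝ)*x ≤ (2*(n:ℝ)-2)*x := mul_le_mul_of_nonneg_right hk2 hx0.le
        apply Real.cos_nonpos_of_pi_div_two_le_of_le
        · nlinarith
        · nlinarith)
    rw [hcf, hxdef]
    apply final_bound n hn
    rw [← hxdef]
    have e2 : 0 ≤ ((2:ℝ)*m-1-n) * x :=
      mul_nonneg (by linarith) hx0.le
    have e3 : ((2:ℝ)*m-1-n) * x ≤ x := by nlinarith
    rw [abs_le]
    constructor <;> nlinarith
end

section
/- Let a ∈ ℝ and ε > 0, and let F : ℝ → ℝ be continuous on the closed interval [a - ε, a + ε]. Then the limit, as α tends to 0 from the right, of (1/2) ∫_{a-ε}^{a+ε} F(μ) · α / (α² + (μ - a)²) dμ equals (π/2) · F(a). -/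
open Real Filter MeasureTheory Set Topology

lemma kernel_integral (a ε α : ℝ) (hα : 0 < α) :
    ∫ x in (a - ε)..(a + ε), α / (α ^ 2 + (x - a) ^ 2) = 2 * arctan (ε / α) := by
  have hd : ∀ x : ℝ, HasDerivAt (fun x => arctan ((x - a) / α))
      (α / (α ^ 2 + (x - a) ^ 2)) x := by
    intro x
    have h1 : HasDerivAt (fun x : ℝ => (x - a) / α) (1 / α) x := by
      simpa using ((hasDerivAt_id x).sub_const a).div_const α
    have h2 := (Real.hasDerivAt_arctan ((x - a) / α)).comp x h1
    refine h2.congr_deriv ?_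
    have h3 : (0:ℝ) < α ^ 2 + (x - a) ^ 2 := by positivity
    have hα' : α ≠ 0 := hα.ne'
    field_simp
  have hc : ∀ x ∈ Set.uIcc (a - ε) (a + ε), ContinuousAt
      (fun x : ℝ => α / (α ^ 2 + (x - a) ^ 2)) x := by
    intro x _
    exact ContinuousAt.div continuousAt_const (by fun_prop) (by positivity)
  rw [intervalIntegral.integral_eq_sub_of_hasDerivAt (fun x _ => hd x)
      ((ContinuousOn.intervalIntegrable (fun x hx => (hc x hx).continuousWithinAt)))]
  have : (a - ε - a) / α = -(ε / α) := by ring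
  have h2 : (a + ε - a) / α = ε / α := by ring
  rw [this, h2, Real.arctan_neg]
  ring

theorem cauchy_delta_function (a ε : ℝ) (hε : 0 < ε) (F : ℝ → ℝ)
    (hF : ContinuousOn F (Set.Icc (a - ε) (a + ε))) :
    Tendsto
      (fun α : ℝ =>
        (1 / 2) * ∫ μ in (a - ε)..(a + ε), F μ * α / (α ^ 2 + (μ - a) ^ 2))
      (nhdsWithin 0 (Set.Ioi 0)) (nhds (Real.pi / 2 * F a)) := by
  have hab : a - ε ≤ a + ε := by linarith
  have hπ : (0:ℝ) < π := Real.pi_pos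
  set s : Set ℝ := Set.Icc (a - ε) (a + ε) with hs_def
  set φ : ℝ → ℝ → ℝ := fun α x => (1 / π) * (α / (α ^ 2 + (x - a) ^ 2)) with hφ_def
  have has : a ∈ s := by constructor <;> simp <;> linarith
  -- integral of kernel over Icc
  have hK : ∀ α : ℝ, 0 < α → ∫ x in s, φ α x = (2 / π) * arctan (ε / α) := by
    intro α hα
    have h1 : ∫ x in s, φ α x = ∫ x in (a - ε)..(a + ε), φ α x := by
      rw [intervalIntegral.integral_of_le hab, hs_def, integral_Icc_eq_integral_Ioc]
    rw [h1, hφ_def]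
    simp only
    rw [intervalIntegral.integral_const_mul, kernel_integral a ε α hα]
    ring
  -- φ integral tends to 1
  have hiφ : Tendsto (fun α => ∫ x in s, φ α x) (𝓝[>] (0:ℝ)) (𝓝 1) := by
    have h2 : Tendsto (fun α : ℝ => ε / α) (𝓝[>] (0:ℝ)) atTop := by
      simp only [div_eq_mul_inv]
      exact tendsto_inv_nhdsGT_zero.const_mul_atTop hε
    have h3 : Tendsto (fun α : ℝ => (2 / π) * arctan (ε / α)) (𝓝[>] (0:ℝ))
        (𝓝 ((2 / π) * (π / 2))) := by
      exact (tendsto_nhds_of_tendsto_nhdsWithin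
        (Real.tendsto_arctan_atTop.comp h2)).const_mul _
    have h4 : (2 / π) * (π / 2) = 1 := by field_simp
    rw [h4] at h3
    refine h3.congr' ?_
    filter_upwards [self_mem_nhdsWithin] with α hα
    exact (hK α hα).symm
  -- uniform convergence away from a
  have hlφ : ∀ u : Set ℝ, IsOpen u → a ∈ u →
      TendstoUniformlyOn φ 0 (𝓝[>] (0:ℝ)) (s \ u) := by
    intro u hu hau
    obtain ⟨r, hr, hball⟩ := Metric.isOpen_iff.1 hu a hau
    rw [Metric.tendstoUniformlyOn_iff]
    intro δ hδ
    have hmem : Set.Ioo (0:ℝ) (δ * r ^ 2) ∈ 𝓝[>] (0:ℝ) :=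
      Ioo_mem_nhdsGT_of_mem ⟨le_rfl, by positivity⟩
    filter_upwards [hmem] with α hα x hx
    have hxr : r ≤ |x - a| := by
      by_contra h
      push_neg at h
      exact hx.2 (hball (by simpa [Real.dist_eq] using h))
    have hr2 : r ^ 2 ≤ (x - a) ^ 2 := by
      have := sq_abs (x - a)
      nlinarith [abs_nonneg (x - a)]
    have hα0 : 0 < α := hα.1
    have hφval : φ α x = (1 / π) * (α / (α ^ 2 + (x - a) ^ 2)) := rfl
    have hφpos : 0 ≤ φ α x := by
      rw [hφval]; positivity
    rw [Real.dist_eq]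
    have hbound : φ α x ≤ α / r ^ 2 := by
      rw [hφval]
      have h1 : α / (α ^ 2 + (x - a) ^ 2) ≤ α / r ^ 2 := by
        apply div_le_div_of_nonneg_left hα0.le (by positivity)
        nlinarith
      calc (1 / π) * (α / (α ^ 2 + (x - a) ^ 2)) ≤ 1 * (α / (α ^ 2 + (x - a) ^ 2)) := by
            apply mul_le_mul_of_nonneg_right _ (by positivity)
            rw [div_le_one hπ]; linarith [Real.pi_gt_three]
        _ = α / (α ^ 2 + (x - a) ^ 2) := one_mul _
        _ ≤ α / r ^ 2 := h1
    have : α / r ^ 2 < δ := by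
      rw [div_lt_iff₀ (by positivity)]
      linarith [hα.2]
    simp only [Pi.zero_apply, zero_sub, abs_neg]
    rw [abs_of_nonneg hφpos]
    linarith
  have key := tendsto_setIntegral_peak_smul_of_integrableOn_of_tendsto
    (μ := volume) (x₀ := a) (l := 𝓝[>] (0:ℝ)) (g := F) (a := F a)
    measurableSet_Icc measurableSet_Icc (Set.Subset.refl s) self_mem_nhdsWithin
    measure_Icc_lt_top.ne
    (by filter_upwards [self_mem_nhdsWithin] with α (hα : 0 < α) x _
        exact mul_nonneg (by positivity) (by positivity))
    hlφ hiφ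
    (by filter_upwards [self_mem_nhdsWithin] with α (hα : 0 < α)
        exact (Continuous.aestronglyMeasurable (by
          apply continuous_const.mul
          exact continuous_const.div (by fun_prop) (fun x => by positivity))).restrict)
    (hF.integrableOn_Icc)
    (hF.continuousWithinAt has)
  have key2 := key.const_mul (π / 2)
  refine key2.congr' ?_
  filter_upwards [self_mem_nhdsWithin] with α (hα : 0 < α)
  have h1 : ∫ μ in (a - ε)..(a + ε), F μ * α / (α ^ 2 + (μ - a) ^ 2)
      = ∫ x in s, (α / (α ^ 2 + (x - a) ^ 2)) * F x := by
    rw [intervalIntegral.integral_of_le hab, hs_def, integral_Icc_eq_integral_Ioc]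
    congr 1
    ext x
    ring
  have h2 : ∫ x in s, φ α x • F x = (1 / π) * ∫ x in s, (α / (α ^ 2 + (x - a) ^ 2)) * F x := by
    rw [← integral_const_mul]
    congr 1
    ext x
    simp [hφ_def, smul_eq_mul]
    ring
  rw [h2, h1]
  field_simp
end

section
/- Let γ : ℝ → ℝ² (Euclidean plane) be twice continuously differentiable with ‖γ'(s)‖ = 1 for all s (arc-length parametrization), and fix s₀ ∈ ℝ. Then the quantity dist(γ(s₀ + i), γ(s₀) + i·γ'(s₀)) / i², i.e., the distance between the point reached by moving arc length i along the curve and the point reached by moving length i along the tangent line at γ(s₀), divided by i², tends to ‖γ''(s₀)‖ / 2 as i tends to 0 through nonzero values. -/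
open Real Filter

theorem cauchy_curve_tangent_distance (γ : ℝ → EuclideanSpace ℝ (Fin 2))
    (hγ : ContDiff ℝ 2 γ) (hunit : ∀ s : ℝ, ‖deriv γ s‖ = 1) (s₀ : ℝ) :
    Tendsto (fun i : ℝ => dist (γ (s₀ + i)) (γ s₀ + i • deriv γ s₀) / i ^ 2)
      (nhdsWithin 0 {0}ᶜ) (nhds (‖deriv (deriv γ) s₀‖ / 2)) := by
  set A := deriv (deriv γ) s₀ with hA
  have hγ1 : Differentiable ℝ γ := hγ.differentiable (by norm_num)
  have hd : ContDiff ℝ 1 (deriv γ) := by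
    have h : ContDiff ℝ ((1 : ℕ) + 1) γ := by exact_mod_cast hγ
    exact (contDiff_succ_iff_deriv.mp h).2.2
  have hdd : HasDerivAt (deriv γ) A s₀ := ((hd.differentiable (by norm_num)) s₀).hasDerivAt
  -- the auxiliary function and its derivative
  set φ : ℝ → EuclideanSpace ℝ (Fin 2) :=
    fun t => γ (s₀ + t) - t • deriv γ s₀ - (t ^ 2 / 2) • A with hφ
  have hφd : ∀ t : ℝ, HasDerivAt φ (deriv γ (s₀ + t) - deriv γ s₀ - t • A) t := by
    intro t
    have h1 : HasDerivAt (fun t : ℝ => γ (s₀ + t)) (deriv γ (s₀ + t)) t := by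
      have hin : HasDerivAt (fun t : ℝ => s₀ + t) 1 t := by
        simpa using (hasDerivAt_id t).const_add s₀
      have := HasDerivAt.scomp t (hγ1 (s₀ + t)).hasDerivAt hin
      rw [one_smul] at this; exact this
    have h2 : HasDerivAt (fun t : ℝ => t • deriv γ s₀) (deriv γ s₀) t := by
      simpa using (hasDerivAt_id t).smul_const (deriv γ s₀)
    have h3 : HasDerivAt (fun t : ℝ => (t ^ 2 / 2) • A) (t • A) t := by
      have : HasDerivAt (fun t : ℝ => t ^ 2 / 2) t t := by
        have := (hasDerivAt_pow 2 t).div_const 2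
        simpa using this.congr_deriv (by ring)
      exact this.smul_const A
    exact (h1.sub h2).sub h3
  -- little-o estimate
  have key : ∀ ε > (0 : ℝ), ∀ᶠ i in nhds (0 : ℝ), ‖φ i - φ 0‖ ≤ ε * i ^ 2 := by
    intro ε hε
    have hlo := hasDerivAt_iff_isLittleO.mp hdd
    have hlo2 := (Asymptotics.isLittleO_iff.mp hlo) hε
    rcases Metric.eventually_nhds_iff.mp hlo2 with ⟨δ, hδ, hδ'⟩
    have : ∀ i : ℝ, |i| < δ → ‖φ i - φ 0‖ ≤ ε * i ^ 2 := by
      intro i hi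
      have bound : ∀ x ∈ segment ℝ (0 : ℝ) i,
          ‖deriv γ (s₀ + x) - deriv γ s₀ - x • A‖ ≤ ε * |i| := by
        intro x hx
        have hxle : |x| ≤ |i| := by
          rcases hx with ⟨a, b, ha, hb, hab, hxeq⟩
          have hx' : x = b * i := by simpa using hxeq.symm
          rw [hx', abs_mul, abs_of_nonneg hb]
          nlinarith [abs_nonneg i]
        have hdist : dist (s₀ + x) s₀ < δ := by
          simpa [Real.dist_eq] using lt_of_le_of_lt hxle hi
        have := hδ' hdist
        simp only [add_sub_cancel_left] at this
        calc ‖deriv γ (s₀ + x) - deriv γ s₀ - x • A‖ ≤ ε * ‖x‖ := this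
          _ ≤ ε * |i| := by
              rw [Real.norm_eq_abs]; exact mul_le_mul_of_nonneg_left hxle hε.le
      have := (convex_segment (0 : ℝ) i).norm_image_sub_le_of_norm_hasDerivWithin_le
        (fun x _ => (hφd x).hasDerivWithinAt) bound (left_mem_segment ℝ 0 i)
        (right_mem_segment ℝ 0 i)
      calc ‖φ i - φ 0‖ ≤ ε * |i| * ‖i - 0‖ := this
        _ = ε * i ^ 2 := by rw [Real.norm_eq_abs, sub_zero, ← sq_abs i]; ring
    filter_upwards [Metric.ball_mem_nhds (0 : ℝ) hδ] with i hi
    exact this i (by simpa [Real.dist_eq] using hi)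
  -- main limit
  have hφ0 : φ 0 = γ s₀ := by simp [hφ]
  have main : Tendsto (fun i : ℝ => (i ^ 2)⁻¹ • (γ (s₀ + i) - (γ s₀ + i • deriv γ s₀)))
      (nhdsWithin 0 {0}ᶜ) (nhds ((1 / 2 : ℝ) • A)) := by
    have h0 : Tendsto (fun i : ℝ => (i ^ 2)⁻¹ • (φ i - φ 0)) (nhdsWithin 0 {0}ᶜ)
        (nhds (0 : EuclideanSpace ℝ (Fin 2))) := by
      rw [NormedAddCommGroup.tendsto_nhds_zero]
      intro ε hε
      have h2 := key (ε / 2) (by linarith)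
      filter_upwards [nhdsWithin_le_nhds h2, self_mem_nhdsWithin] with i hi hi0
      have hi0' : i ≠ 0 := hi0
      have hipos : (0 : ℝ) < i ^ 2 := by positivity
      rw [norm_smul, norm_inv, Real.norm_eq_abs, abs_of_pos hipos]
      calc (i ^ 2)⁻¹ * ‖φ i - φ 0‖ ≤ (i ^ 2)⁻¹ * (ε / 2 * i ^ 2) := by
            exact mul_le_mul_of_nonneg_left hi (by positivity)
        _ = ε / 2 := by field_simp
        _ < ε := by linarith
    have heq : ∀ᶠ i in nhdsWithin (0 : ℝ) {0}ᶜ,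
        (i ^ 2)⁻¹ • (φ i - φ 0) + (1 / 2 : ℝ) • A
          = (i ^ 2)⁻¹ • (γ (s₀ + i) - (γ s₀ + i • deriv γ s₀)) := by
      filter_upwards [self_mem_nhdsWithin] with i hi0
      have hi0' : (i : ℝ) ≠ 0 := hi0
      have hipos : (i ^ 2 : ℝ) ≠ 0 := pow_ne_zero 2 hi0'
      have h2 : (i ^ 2)⁻¹ • ((i ^ 2 / 2) • A) = (1 / 2 : ℝ) • A := by
        rw [smul_smul]; congr 1; field_simp
      rw [hφ0]
      simp only [hφ, smul_sub, smul_add]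
      rw [h2]
      abel
    have := (h0.add_const ((1 / 2 : ℝ) • A)).congr' heq
    simpa using this
  have hnorm := main.norm
  have : ‖(1 / 2 : ℝ) • A‖ = ‖A‖ / 2 := by
    rw [norm_smul]; simp; ring
  rw [this] at hnorm
  refine hnorm.congr' ?_
  filter_upwards [self_mem_nhdsWithin] with i hi0
  have hi0' : (i : ℝ) ≠ 0 := hi0
  have hipos : (0 : ℝ) < i ^ 2 := by positivity
  rw [norm_smul, norm_inv, Real.norm_eq_abs, abs_of_pos hipos, dist_eq_norm]
  ring
end

section
/- Let γ : ℝ → ℝ² (Euclidean plane) be twice continuously differentiable with ‖γ'(s)‖ = 1 for all s, fix s₀ ∈ ℝ with γ''(s₀) ≠ 0, and let c = γ(s₀) + (1/‖γ''(s₀)‖²)·γ''(s₀) be the center of curvature at γ(s₀). Suppose p is a function assigning to each sufficiently small nonzero i a point p(i) ∈ ℝ² lying on both the normal line to γ at s₀ and the normal line to γ at s₀ + i, i.e., ⟨p(i) − γ(s₀), γ'(s₀)⟩ = 0 and ⟨p(i) − γ(s₀ + i), γ'(s₀ + i)⟩ = 0 for all i ≠ 0 in some punctured neighborhood of 0. Then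 p(i) tends to c as i tends to 0 through nonzero values. -/
open Real Filter RealInnerProductSpace

theorem cauchy_center_of_curvature (γ : ℝ → EuclideanSpace ℝ (Fin 2))
    (hγ : ContDiff ℝ 2 γ) (hunit : ∀ s : ℝ, ‖deriv γ s‖ = 1) (s₀ : ℝ)
    (hcurv : deriv (deriv γ) s₀ ≠ 0)
    (p : ℝ → EuclideanSpace ℝ (Fin 2))
    (hp : ∀ᶠ i in nhdsWithin (0 : ℝ) {0}ᶜ,
      ⟪p i - γ s₀, deriv γ s₀⟫ = 0 ∧ ⟪p i - γ (s₀ + i), deriv γ (s₀ + i)⟫ = 0) :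
    Tendsto p (nhdsWithin (0 : ℝ) {0}ᶜ)
      (nhds (γ s₀ + (1 / ‖deriv (deriv γ) s₀‖ ^ 2) • deriv (deriv γ) s₀)) := by
  set T := deriv γ s₀ with hT
  set w := deriv (deriv γ) s₀ with hw
  -- differentiability
  have hγ' : ContDiff ℝ (1 + 1) γ := by norm_num; exact hγ
  have hd1 : Differentiable ℝ γ := (contDiff_succ_iff_deriv.mp hγ').1
  have hd2 : ContDiff ℝ 1 (deriv γ) := (contDiff_succ_iff_deriv.mp hγ').2.2
  have hd2' : Differentiable ℝ (deriv γ) := hd2.differentiable one_ne_zero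
  -- γ'' ⟂ γ'
  have hwT : ⟪w, T⟫ = 0 := by
    have hD : HasDerivAt (fun s => ⟪deriv γ s, deriv γ s⟫)
        (⟪T, w⟫ + ⟪w, T⟫) s₀ :=
      HasDerivAt.inner ℝ (hd2' s₀).hasDerivAt (hd2' s₀).hasDerivAt
    have hC : (fun s => ⟪deriv γ s, deriv γ s⟫) = fun _ : ℝ => (1 : ℝ) := by
      funext s
      rw [real_inner_self_eq_norm_sq, hunit]; norm_num
    rw [hC] at hD
    have h0 := hD.unique (hasDerivAt_const s₀ (1:ℝ))
    have hcomm : ⟪T, w⟫ = ⟪w, T⟫ := real_inner_comm w T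
    linarith
  have hT0 : T ≠ 0 := by
    intro h
    have := hunit s₀
    rw [← hT, h] at this; simp at this
  -- key 2D fact
  have hKey : ∀ v : EuclideanSpace ℝ (Fin 2), ⟪v, T⟫ = 0 → ∃ c : ℝ, v = c • w := by
    intro v hv
    have hwmem : w ∈ (ℝ ∙ T)ᗮ :=
      Submodule.mem_orthogonal_singleton_iff_inner_left.mpr hwT
    have hvmem : v ∈ (ℝ ∙ T)ᗮ :=
      Submodule.mem_orthogonal_singleton_iff_inner_left.mpr hv
    have hrank : Module.finrank ℝ ((ℝ ∙ T)ᗮ : Submodule ℝ (EuclideanSpace ℝ (Fin 2))) = 1 := by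
      have h1 : Module.finrank ℝ (ℝ ∙ T : Submodule ℝ (EuclideanSpace ℝ (Fin 2))) = 1 :=
        finrank_span_singleton hT0
      have h2 := Submodule.finrank_add_finrank_orthogonal (K := (ℝ ∙ T))
      rw [h1, finrank_euclideanSpace_fin] at h2
      omega
    have hspan : (ℝ ∙ w) = (ℝ ∙ T)ᗮ := by
      apply Submodule.eq_of_le_of_finrank_eq
      · rwa [Submodule.span_singleton_le_iff_mem]
      · rw [hrank, finrank_span_singleton hcurv]
    rcases Submodule.mem_span_singleton.mp (hspan ▸ hvmem) with ⟨c, hc⟩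
    exact ⟨c, hc.symm⟩
    -- derivatives of auxiliary scalar functions
  set f : ℝ → ℝ := fun i => ⟪w, deriv γ (s₀ + i)⟫ with hf
  set g : ℝ → ℝ := fun i => ⟪γ (s₀ + i) - γ s₀, deriv γ (s₀ + i)⟫ with hg
  have hshift : HasDerivAt (fun i : ℝ => s₀ + i) 1 0 := by
    simpa using (hasDerivAt_id (0:ℝ)).const_add s₀
  have hdg : HasDerivAt (fun i : ℝ => deriv γ (s₀ + i)) w 0 := by
    have h := (hd2' (s₀ + 0)).hasDerivAt.scomp 0 hshift
    simp only [add_zero, one_smul] at h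
    exact h
  have hdγ : HasDerivAt (fun i : ℝ => γ (s₀ + i) - γ s₀) T 0 := by
    have h := ((hd1 (s₀ + 0)).hasDerivAt.scomp 0 hshift).sub_const (γ s₀)
    simpa [hT] using h
  have hdf : HasDerivAt f (‖w‖ ^ 2) 0 := by
    have h := HasDerivAt.inner ℝ (hasDerivAt_const (0:ℝ) w) hdg
    simp only [inner_zero_left, add_zero, real_inner_self_eq_norm_sq] at h
    exact h
  have hDg : HasDerivAt g 1 0 := by
    have h := HasDerivAt.inner ℝ hdγ hdg
    have h1 : ⟪γ (s₀ + 0) - γ s₀, w⟫ + ⟪T, deriv γ (s₀ + 0)⟫ = 1 := by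
      rw [add_zero, sub_self, inner_zero_left, zero_add, hT, real_inner_self_eq_norm_sq, hunit]
      norm_num
    rw [h1] at h
    exact h
  have hw2 : ‖w‖ ^ 2 ≠ 0 := pow_ne_zero _ (norm_ne_zero_iff.mpr hcurv)
  have hf0 : f 0 = 0 := by simpa [hf, hT] using hwT
  have hg0 : g 0 = 0 := by simp [hg]
  have hfs : Tendsto (fun i => f i / i) (nhdsWithin (0:ℝ) {0}ᶜ) (nhds (‖w‖ ^ 2)) := by
    have := hasDerivAt_iff_tendsto_slope.mp hdf
    refine this.congr (fun i => ?_)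
    simp [slope, hf0, div_eq_inv_mul]
  have hgs : Tendsto (fun i => g i / i) (nhdsWithin (0:ℝ) {0}ᶜ) (nhds 1) := by
    have := hasDerivAt_iff_tendsto_slope.mp hDg
    refine this.congr (fun i => ?_)
    simp [slope, hg0, div_eq_inv_mul]
  have hfne : ∀ᶠ i in nhdsWithin (0:ℝ) {0}ᶜ, f i ≠ 0 := by
    filter_upwards [hfs.eventually_ne hw2] with i hi
    intro h
    rw [h] at hi; simp at hi
  have hquot : Tendsto (fun i => g i / f i) (nhdsWithin (0:ℝ) {0}ᶜ)
      (nhds (1 / ‖w‖ ^ 2)) := by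
    have h := hgs.div hfs hw2
    refine h.congr' ?_
    filter_upwards [self_mem_nhdsWithin] with i hi
    have hi' : (i:ℝ) ≠ 0 := hi
    rcases eq_or_ne (f i) 0 with h0 | h0
    · simp [h0]
    · simp only [Pi.div_apply]; field_simp
  -- eventual formula for p
  have heq : ∀ᶠ i in nhdsWithin (0:ℝ) {0}ᶜ, p i = γ s₀ + (g i / f i) • w := by
    filter_upwards [hp, hfne] with i hpi hfi
    obtain ⟨h1, h2⟩ := hpi
    obtain ⟨c, hc⟩ := hKey (p i - γ s₀) h1
    have hrw : p i - γ (s₀ + i) = c • w - (γ (s₀ + i) - γ s₀) := by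
      rw [← hc]; abel
    rw [hrw] at h2
    rw [inner_sub_left, inner_smul_left] at h2
    have hcf : c * f i = g i := by
      simpa [hf, hg] using sub_eq_zero.mp h2
    have hc' : c = g i / f i := by
      field_simp [hfi] at hcf ⊢; linarith [hcf]
    have : p i = γ s₀ + c • w := by rw [← hc]; abel
    rw [this, hc']
  have hlim : Tendsto (fun i => γ s₀ + (g i / f i) • w) (nhdsWithin (0:ℝ) {0}ᶜ)
      (nhds (γ s₀ + (1 / ‖w‖ ^ 2) • w)) :=
    tendsto_const_nhds.add (hquot.smul_const w)
  exact Tendsto.congr' (heq.mono fun i hi => hi.symm) hlim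
end

section
/- Let f : ℝ → ℝ, x₀ ∈ ℝ, and L ∈ ℝ. Then f has derivative L at x₀ if and only if for every nonzero infinitesimal hyperreal ε, the hyperreal (f*(x₀ + ε) − f(x₀)) / ε is infinitely close to L (i.e., its standard part is L), where f* denotes the natural extension of f to the hyperreals. -/
open Hyperreal Filter Topology

/-- The natural extension of a real function to the hyperreals, obtained by
applying the function termwise to representing sequences (the germ map). -/
noncomputable def Hyperreal.extend (f : ℝ → ℝ) : ℝ* → ℝ* :=
  Filter.Germ.map f

theorem aux_ratio_eq (f : ℝ → ℝ) (x₀ : ℝ) (a : ℕ → ℝ) :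
    (Hyperreal.extend f ((x₀ : ℝ*) + ofSeq a) - (f x₀ : ℝ*)) / ofSeq a =
      ofSeq (fun n => (f (x₀ + a n) - f x₀) / a n) := rfl

theorem hasDerivAt_iff_isSt_ratio (f : ℝ → ℝ) (x₀ L : ℝ) :
    HasDerivAt f L x₀ ↔
      ∀ η : ℝ*, Infinitesimal η → η ≠ 0 →
        IsSt ((Hyperreal.extend f ((x₀ : ℝ*) + η) - (f x₀ : ℝ*)) / η) L := by
  set g : ℝ → ℝ := fun t => (f (x₀ + t) - f x₀) / t with hg
  have hderiv : HasDerivAt f L x₀ ↔ Tendsto g (𝓝[≠] 0) (𝓝 L) := by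
    rw [hasDerivAt_iff_tendsto_slope_zero]
    simp only [smul_eq_mul, hg]
    exact tendsto_congr fun t => by ring_nf
  rw [hderiv]
  constructor
  · intro h η hinf hne
    rcases ofSeq_surjective η with ⟨a, rfl⟩
    have ha : Tendsto a (hyperfilter ℕ : Filter ℕ) (𝓝 0) :=
      isSt_ofSeq_iff_tendsto.1 hinf
    have hne' : ∀ᶠ n in (hyperfilter ℕ : Filter ℕ), a n ≠ 0 := by
      refine Ultrafilter.eventually_not.2 fun hcon => hne (Germ.coe_eq.2 ?_)
      exact hcon
    have ha' : Tendsto a (hyperfilter ℕ : Filter ℕ) (𝓝[≠] 0) := by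
      rw [tendsto_nhdsWithin_iff]
      exact ⟨ha, hne'.mono fun n hn => hn⟩
    rw [aux_ratio_eq, isSt_ofSeq_iff_tendsto]
    exact h.comp ha'
  · intro H
    by_contra hcon
    rw [Metric.tendsto_nhdsWithin_nhds] at hcon
    push_neg at hcon
    obtain ⟨eps, heps, hcon⟩ := hcon
    choose y hy1 hy2 hy3 using fun n : ℕ =>
      hcon (1 / (n + 1)) (by positivity)
    set a : ℕ → ℝ := y with ha
    have ha0 : Tendsto a atTop (𝓝 0) := by
      rw [Metric.tendsto_atTop]
      intro δ hδ
      obtain ⟨N, hN⟩ := exists_nat_one_div_lt hδ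
      refine ⟨N, fun n hn => ?_⟩
      have : dist (a n) 0 < 1 / (n + 1) := hy2 n
      calc dist (a n) 0 < 1 / (n + 1) := hy2 n
        _ ≤ 1 / (N + 1) := by
            apply div_le_div_of_nonneg_left one_pos.le (by positivity)
            exact_mod_cast add_le_add_left (Nat.cast_le.2 hn) 1
        _ < δ := hN
    have hinf : Infinitesimal (ofSeq a) :=
      isSt_ofSeq_iff_tendsto.2 (ha0.mono_left Nat.hyperfilter_le_atTop)
    have hne : ofSeq a ≠ 0 := by
      intro h0
      have := Germ.coe_eq.1 h0
      rcases (this.and (Eventually.of_forall hy1)).exists with ⟨n, hn1, hn2⟩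
      exact hn2 hn1
    have := H (ofSeq a) hinf hne
    rw [aux_ratio_eq, isSt_ofSeq_iff_tendsto, Metric.tendsto_nhds] at this
    rcases ((this eps heps).and (Eventually.of_forall hy3)).exists with ⟨n, hn1, hn2⟩
    exact absurd hn1 (not_lt.2 hn2)
end

section
/- Let f : ℝ → ℝ and L ∈ ℝ. Then f(s) tends to L as s tends to 0 through nonzero values if and only if for every nonzero infinitesimal hyperreal ε, the hyperreal f*(ε) is infinitely close to L (i.e., its standard part is L), where f* denotes the natural extension of f to the hyperreals. -/
open Hyperreal Filter Topology

theorem tendsto_iff_isSt_extend (f : ℝ → ℝ) (L : ℝ) :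
    Tendsto f (nhdsWithin (0 : ℝ) {0}ᶜ) (nhds L) ↔
      ∀ η : ℝ*, Infinitesimal η → η ≠ 0 → IsSt (Hyperreal.extend f η) L := by
  constructor
  · intro h η hinf hne
    rcases ofSeq_surjective η with ⟨g, rfl⟩
    have hmap : Hyperreal.extend f (ofSeq g) = ofSeq (f ∘ g) := rfl
    rw [hmap, isSt_ofSeq_iff_tendsto]
    have htend : Tendsto g (hyperfilter ℕ) (𝓝 0) := by
      have := hinf
      rwa [Infinitesimal, isSt_ofSeq_iff_tendsto] at this
    have hne' : ∀ᶠ n in (hyperfilter ℕ : Filter ℕ), g n ≠ 0 := by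
      by_contra hcon
      exact hne (Filter.Germ.coe_eq.2
        ((Ultrafilter.eventually_not.2 hcon).mono fun n hn => not_not.1 hn))
    have : Tendsto g (hyperfilter ℕ) (nhdsWithin (0 : ℝ) {0}ᶜ) :=
      tendsto_nhdsWithin_iff.2 ⟨htend, by simpa using hne'⟩
    exact h.comp this
  · intro h
    rw [Metric.tendsto_nhdsWithin_nhds]
    by_contra hcon
    push_neg at hcon
    obtain ⟨e, he, hbad⟩ := hcon
    choose g hg1 hg2 hg3 using fun n : ℕ => hbad (1 / (n + 1)) (by positivity)
    have hg0 : Tendsto g atTop (𝓝 0) := by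
      rw [tendsto_iff_dist_tendsto_zero]
      apply squeeze_zero (fun n => dist_nonneg) (fun n => (hg2 n).le)
      exact tendsto_one_div_add_atTop_nhds_zero_nat
    have hinf : Infinitesimal (ofSeq g) := infinitesimal_of_tendsto_zero hg0
    have hne : ofSeq g ≠ 0 := by
      intro h0
      have : ∀ᶠ n in (hyperfilter ℕ : Filter ℕ), g n = 0 := Filter.Germ.coe_eq.1 h0
      rcases this.exists with ⟨n, hn⟩
      exact (hg1 n) (by simp [hn])
    have := h (ofSeq g) hinf hne
    rw [show Hyperreal.extend f (ofSeq g) = ofSeq (f ∘ g) from rfl,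
      isSt_ofSeq_iff_tendsto, Metric.tendsto_nhds] at this
    rcases (this e he).exists with ⟨n, hn⟩
    exact absurd hn (not_lt.2 (hg3 n))
end
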